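/- Let G be a finite 2-group with G/G' ≅ (ℤ/2)³ such that G/G₃ is the group 32.036 presented by generators a₁,a₂,a₃ with a₁² ≡ a₂² ≡ 1, a₃² ≡ c₁₃, c₂₃ ≡ 1 (mod G₃). Let B = ⟨a₃, a₁a₂, G'⟩. Then the Frattini subgroup of B equals G', and hence B has rank 2. -/

import Mathlib

open Subgroup

open scoped commutatorElement

section Aux

variable {G : Type*} [Group G]

/-- In a group generated by three elements, the commutator subgroup is generated by the
commutators of the generators together with the third term of the lower central series. -/
lemma commutator_le_closure_three (a₁ a₂ a₃ : G)
    (hgen : Subgroup.closure {a₁, a₂, a₃} = ⊤) :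
    commutator G ≤
      Subgroup.closure {⁅a₁, a₂⁆, ⁅a₁, a₃⁆, ⁅a₂, a₃⁆} ⊔ (⊤ : Subgroup G).lowerCentralSeries 2 := by
  set C : Subgroup G :=
    Subgroup.closure {⁅a₁, a₂⁆, ⁅a₁, a₃⁆, ⁅a₂, a₃⁆} ⊔ (⊤ : Subgroup G).lowerCentralSeries 2 with hCdef
  have hlcs : (⊤ : Subgroup G).lowerCentralSeries 2 ≤ C := le_sup_right
  have memcomm : ∀ x y : G, ⁅x, y⁆ ∈ commutator G := by
    intro x y
    rw [_root_.commutator_def]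
    exact Subgroup.commutator_mem_commutator (mem_top x) (mem_top y)
  have hcomm2 : ∀ x y : G, x ∈ commutator G → ⁅x, y⁆ ∈ (⊤ : Subgroup G).lowerCentralSeries 2 := by
    intro x y hx
    have h2 : (⊤ : Subgroup G).lowerCentralSeries 2 = ⁅(⊤ : Subgroup G).lowerCentralSeries 1, (⊤ : Subgroup G)⁆ := rfl
    rw [h2]
    exact Subgroup.commutator_mem_commutator (by rwa [Subgroup.top_lowerCentralSeries_one]) (mem_top y)
  have conjC : ∀ g x : G, x ∈ commutator G → x ∈ C → g * x * g⁻¹ ∈ C := by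
    intro g x hxc hx
    have h1 : g * x * g⁻¹ = x * ⁅x⁻¹, g⁆ := by
      rw [commutatorElement_def]; group
    rw [h1]
    exact mul_mem hx (hlcs (hcomm2 _ _ (inv_mem hxc)))
  have swapC : ∀ x y : G, ⁅x, y⁆ ∈ C → ⁅y, x⁆ ∈ C := by
    intro x y h
    rw [← commutatorElement_inv]
    exact inv_mem h
  have mulL : ∀ a b c : G, ⁅a, c⁆ ∈ C → ⁅b, c⁆ ∈ C → ⁅a * b, c⁆ ∈ C := by
    intro a b c ha hb
    have h1 : ⁅a * b, c⁆ = (a * ⁅b, c⁆ * a⁻¹) * ⁅a, c⁆ := by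
      simp only [commutatorElement_def]; group
    rw [h1]
    exact mul_mem (conjC a _ (memcomm b c) hb) ha
  have invL : ∀ a c : G, ⁅a, c⁆ ∈ C → ⁅a⁻¹, c⁆ ∈ C := by
    intro a c ha
    have h1 : ⁅a⁻¹, c⁆ = a⁻¹ * ⁅a, c⁆⁻¹ * (a⁻¹)⁻¹ := by
      simp only [commutatorElement_def]; group
    rw [h1]
    exact conjC a⁻¹ ⁅a, c⁆⁻¹ (inv_mem (memcomm a c)) (inv_mem ha)
  have g12 : ⁅a₁, a₂⁆ ∈ C := mem_sup_left (subset_closure (by simp))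
  have g13 : ⁅a₁, a₃⁆ ∈ C := mem_sup_left (subset_closure (by simp))
  have g23 : ⁅a₂, a₃⁆ ∈ C := mem_sup_left (subset_closure (by simp))
  have key : ∀ x ∈ ({a₁, a₂, a₃} : Set G), ∀ y ∈ ({a₁, a₂, a₃} : Set G), ⁅x, y⁆ ∈ C := by
    intro x hx y hy
    simp only [Set.mem_insert_iff, Set.mem_singleton_iff] at hx hy
    rcases hx with rfl | rfl | rfl <;> rcases hy with rfl | rfl | rfl <;>
      first
        | (rw [commutatorElement_self]; exact one_mem C)
        | exact g12
        | exact g13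
        | exact g23
        | exact swapC _ _ g12
        | exact swapC _ _ g13
        | exact swapC _ _ g23
  have inner : ∀ y ∈ ({a₁, a₂, a₃} : Set G), ∀ x : G, ⁅x, y⁆ ∈ C := by
    intro y hy x
    have hx : x ∈ Subgroup.closure {a₁, a₂, a₃} := by rw [hgen]; exact mem_top x
    refine Subgroup.closure_induction (fun z hz => key z hz y hy) ?_ ?_ ?_ hx
    · have h1 : ⁅(1 : G), y⁆ = 1 := by simp only [commutatorElement_def]; group
      rw [h1]; exact one_mem C
    · intro z w _ _ hz hw; exact mulL z w y hz hw
    · intro z _ hz; exact invL z y hz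
  have outer : ∀ y : G, ∀ x : G, ⁅x, y⁆ ∈ C := by
    intro y
    have hy : y ∈ Subgroup.closure {a₁, a₂, a₃} := by rw [hgen]; exact mem_top y
    refine Subgroup.closure_induction (fun z hz => inner z hz) ?_ ?_ ?_ hy
    · intro x
      have h1 : ⁅x, (1 : G)⁆ = 1 := by simp only [commutatorElement_def]; group
      rw [h1]; exact one_mem C
    · intro z w _ _ hz hw x
      exact swapC _ _ (mulL z w x (swapC _ _ (hz x)) (swapC _ _ (hw x)))
    · intro z _ hz x
      exact swapC _ _ (invL z x (swapC _ _ (hz x)))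
  rw [_root_.commutator_def]
  exact Subgroup.commutator_le.mpr fun x _ y _ => outer y x

/-- Hall's descent argument: a normal subgroup `N` with `N ⊔ G₃ = G'` in a finite 2-group
equals `G'`. -/
lemma hall_descent [Finite G] (hp : IsPGroup 2 G) (N : Subgroup G) (hNn : N.Normal)
    (h : N ⊔ (⊤ : Subgroup G).lowerCentralSeries 2 = commutator G) : N = commutator G := by
  haveI := hNn
  have key : ∀ k, N ⊔ (⊤ : Subgroup G).lowerCentralSeries (k + 2) = commutator G := by
    intro k
    induction k with
    | zero => exact h
    | succ n ih =>
      set M : Subgroup G := N ⊔ (⊤ : Subgroup G).lowerCentralSeries (n + 3) with hMdef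
      haveI hMn : M.Normal := Subgroup.sup_normal _ _
      have hle : (⊤ : Subgroup G).lowerCentralSeries 2 ≤ M := by
        have h2 : (⊤ : Subgroup G).lowerCentralSeries 2 = ⁅commutator G, (⊤ : Subgroup G)⁆ := by
          have h2' : (⊤ : Subgroup G).lowerCentralSeries 2 = ⁅(⊤ : Subgroup G).lowerCentralSeries 1, (⊤ : Subgroup G)⁆ := rfl
          rw [h2', Subgroup.top_lowerCentralSeries_one]
        rw [h2, ← ih]
        have hmain : ∀ g ∈ Subgroup.closure
            ((N : Set G) ∪ ((⊤ : Subgroup G).lowerCentralSeries (n + 2) : Set G)), ∀ t : G, ⁅g, t⁆ ∈ M := by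
          intro g hg
          refine Subgroup.closure_induction (p := fun g _ => ∀ t : G, ⁅g, t⁆ ∈ M) ?_ ?_ ?_ ?_ hg
          · rintro z (hz | hz) t
            · exact mem_sup_left
                (Subgroup.commutator_le_left N ⊤
                  (Subgroup.commutator_mem_commutator hz (mem_top t)))
            · have hz3 : ⁅z, t⁆ ∈ (⊤ : Subgroup G).lowerCentralSeries (n + 3) := by
                have hrfl : (⊤ : Subgroup G).lowerCentralSeries (n + 3) =
                    ⁅(⊤ : Subgroup G).lowerCentralSeries (n + 2), (⊤ : Subgroup G)⁆ := rfl
                rw [hrfl]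
                exact Subgroup.commutator_mem_commutator hz (mem_top t)
              exact mem_sup_right hz3
          · intro t
            have hone : ⁅(1 : G), t⁆ = 1 := by simp only [commutatorElement_def]; group
            rw [hone]; exact one_mem M
          · intro z w _ _ hz hw t
            have hone : ⁅z * w, t⁆ = (z * ⁅w, t⁆ * z⁻¹) * ⁅z, t⁆ := by
              simp only [commutatorElement_def]; group
            rw [hone]
            exact mul_mem (hMn.conj_mem _ (hw t) z) (hz t)
          · intro z _ hz t
            have hone : ⁅z⁻¹, t⁆ = z⁻¹ * ⁅z, t⁆⁻¹ * (z⁻¹)⁻¹ := by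
              simp only [commutatorElement_def]; group
            rw [hone]
            exact hMn.conj_mem _ (inv_mem (hz t)) z⁻¹
        apply Subgroup.commutator_le.mpr
        intro g hg t _
        refine hmain g ?_ t
        rwa [Subgroup.closure_union, Subgroup.closure_eq, Subgroup.closure_eq]
      apply le_antisymm
      · apply sup_le
        · rw [← h]; exact le_sup_left
        · calc (⊤ : Subgroup G).lowerCentralSeries (n + 3) ≤ (⊤ : Subgroup G).lowerCentralSeries 1 :=
              Subgroup.lowerCentralSeries_antitone _ (by omega)
            _ = commutator G := Subgroup.top_lowerCentralSeries_one
      · rw [← h]; exact sup_le le_sup_left hle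
  obtain ⟨n, hn⟩ := Subgroup.nilpotent_iff_lowerCentralSeries.mp hp.isNilpotent
  have hbot : (⊤ : Subgroup G).lowerCentralSeries (n + 2) = ⊥ :=
    le_bot_iff.mp (hn ▸ Subgroup.lowerCentralSeries_antitone _ (by omega : n ≤ n + 2))
  have hkey := key n
  rwa [hbot, sup_bot_eq] at hkey

/-- Frattini-type nongeneration in a finite 2-group: if `K` together with squares and
commutators generates, then `K` is everything. -/
lemma two_group_nongen {P : Type*} [Group P] [Finite P] (hp : IsPGroup 2 P) (K : Subgroup P)
    (h : K ⊔ (Subgroup.closure ((fun x => x ^ 2) '' (Set.univ : Set P)) ⊔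
      ⁅(⊤ : Subgroup P), (⊤ : Subgroup P)⁆) = ⊤) : K = ⊤ := by
  haveI : Group.IsNilpotent P := hp.isNilpotent
  haveI : Fact (Nat.Prime 2) := ⟨Nat.prime_two⟩
  rcases eq_top_or_exists_le_coatom K with hK | ⟨M, hM, hKM⟩
  · exact hK
  exfalso
  haveI : M.Normal := NormalizerCondition.normal_of_coatom M normalizerCondition_of_isNilpotent hM
  set mk : P →* P ⧸ M := QuotientGroup.mk' M with hmk
  have hmksurj : Function.Surjective mk := QuotientGroup.mk'_surjective M
  obtain ⟨x, hx⟩ := SetLike.exists_of_lt hM.1.lt_top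
  have hx1 : mk x ≠ 1 := by
    simp only [hmk, QuotientGroup.mk'_apply, ne_eq, QuotientGroup.eq_one_iff]
    exact hx.2
  have hQ : IsPGroup 2 (P ⧸ M) := hp.to_quotient M
  obtain ⟨k, hk⟩ := hQ (mk x)
  have hord : orderOf (mk x) ∣ 2 ^ k := orderOf_dvd_of_pow_eq_one hk
  obtain ⟨j, hjk, hj⟩ := (Nat.dvd_prime_pow Nat.prime_two).mp hord
  have hj1 : 1 ≤ j := by
    by_contra hc
    push_neg at hc
    interval_cases j
    simp only [pow_zero] at hj
    exact hx1 (orderOf_eq_one_iff.mp hj)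
  set r : P ⧸ M := mk x ^ 2 ^ (j - 1) with hr
  have hr2 : r ^ 2 = 1 := by
    rw [hr, ← pow_mul, ← pow_succ]
    have hjj : j - 1 + 1 = j := by omega
    rw [hjj, ← hj, pow_orderOf_eq_one]
  have hrne : r ≠ 1 := by
    intro hc
    have hdvd : orderOf (mk x) ∣ 2 ^ (j - 1) := orderOf_dvd_of_pow_eq_one hc
    rw [hj] at hdvd
    have hle := Nat.le_of_dvd (by positivity) hdvd
    have hlt : 2 ^ (j - 1) < 2 ^ j := Nat.pow_lt_pow_right one_lt_two (by omega)
    omega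
  -- the cyclic subgroup generated by r is everything
  have hzp : Subgroup.zpowers r = ⊤ := by
    by_contra hne
    have hcom : M ≤ (Subgroup.zpowers r).comap mk := by
      intro m hm
      have hm1 : mk m = 1 := by
        simp only [hmk, QuotientGroup.mk'_apply, QuotientGroup.eq_one_iff]
        exact hm
      simp only [Subgroup.mem_comap, hm1]
      exact one_mem _
    rcases lt_or_eq_of_le hcom with hlt | heq
    · have htop : (Subgroup.zpowers r).comap mk = ⊤ := hM.2 _ hlt
      have : Subgroup.zpowers r = ⊤ := by
        rw [← Subgroup.map_comap_eq_self_of_surjective hmksurj (Subgroup.zpowers r), htop,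
          Subgroup.map_top_of_surjective _ hmksurj]
      exact hne this
    · obtain ⟨y, hy⟩ := hmksurj r
      have hy' : y ∈ (Subgroup.zpowers r).comap mk := by
        simp [Subgroup.mem_comap, hy, Subgroup.mem_zpowers]
      rw [← heq] at hy'
      have : r = 1 := by
        rw [← hy]
        simpa only [hmk, QuotientGroup.mk'_apply, QuotientGroup.eq_one_iff] using hy'
      exact hrne this
  have hcardQ : Nat.card (P ⧸ M) = 2 := by
    calc Nat.card (P ⧸ M) = Nat.card (⊤ : Subgroup (P ⧸ M)) :=
          (Nat.card_congr Subgroup.topEquiv.toEquiv).symm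
      _ = Nat.card (Subgroup.zpowers r) := by rw [hzp]
      _ = orderOf r := Nat.card_zpowers r
      _ = 2 := orderOf_eq_prime hr2 hrne
  have hcommQ : ∀ a b : P ⧸ M, a * b = b * a := by
    intro a b
    have ha : a ∈ Subgroup.zpowers r := by rw [hzp]; exact mem_top a
    have hb : b ∈ Subgroup.zpowers r := by rw [hzp]; exact mem_top b
    obtain ⟨m, rfl⟩ := ha
    obtain ⟨n, rfl⟩ := hb
    exact Commute.zpow_zpow (Commute.refl r) m n
  have hsq : ∀ p : P, p ^ 2 ∈ M := by
    intro p
    have : mk (p ^ 2) = 1 := by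
      rw [map_pow, ← hcardQ]
      exact pow_card_eq_one'
    simpa only [hmk, QuotientGroup.mk'_apply, QuotientGroup.eq_one_iff] using this
  have hcm : ∀ p q : P, ⁅p, q⁆ ∈ M := by
    intro p q
    have : mk ⁅p, q⁆ = 1 := by
      rw [map_commutatorElement]
      exact commutatorElement_eq_one_iff_mul_comm.mpr (hcommQ _ _)
    simpa only [hmk, QuotientGroup.mk'_apply, QuotientGroup.eq_one_iff] using this
  have : (⊤ : Subgroup P) ≤ M := by
    rw [← h]
    apply sup_le hKM
    apply sup_le
    · rw [Subgroup.closure_le]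
      rintro _ ⟨p, -, rfl⟩
      exact hsq p
    · exact Subgroup.commutator_le.mpr fun p _ q _ => hcm p q
  exact hM.1 (le_antisymm le_top this)

/-- A group generated by two commuting involutions has at most 4 elements. -/
lemma card_le_four {A : Type*} [Group A] (u v : A) (hu : u * u = 1) (hv : v * v = 1)
    (huv : u * v = v * u) (hgen : Subgroup.closure {u, v} = ⊤) : Nat.card A ≤ 4 := by
  have e1 : u * (u * v) = v := by rw [← mul_assoc, hu, one_mul]
  have e3 : v * (u * v) = u := by rw [← mul_assoc, ← huv, mul_assoc, hv, mul_one]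
  have e4 : (u * v) * u = v := by rw [mul_assoc, ← huv, ← mul_assoc, hu, one_mul]
  have e5 : (u * v) * v = u := by rw [mul_assoc, hv, mul_one]
  have e6 : (u * v) * (u * v) = 1 := by rw [mul_assoc, e3, hu]
  have hmem : ∀ a : A, a = 1 ∨ a = u ∨ a = v ∨ a = u * v := by
    intro a
    have ha : a ∈ Subgroup.closure {u, v} := by rw [hgen]; exact mem_top a
    refine Subgroup.closure_induction
      (p := fun a _ => a = 1 ∨ a = u ∨ a = v ∨ a = u * v) ?_ ?_ ?_ ?_ ha
    · rintro z (rfl | rfl)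
      · exact Or.inr (Or.inl rfl)
      · exact Or.inr (Or.inr (Or.inl rfl))
    · exact Or.inl rfl
    · have huv' : v * u = u * v := huv.symm
      rintro z w _ _ hz hw
      rcases hz with rfl | rfl | rfl | rfl <;> rcases hw with rfl | rfl | rfl | rfl <;>
        simp [hu, hv, huv', e1, e3, e4, e5, e6]
    · rintro z _ hz
      rcases hz with rfl | rfl | rfl | rfl
      · rw [inv_one]; exact Or.inl rfl
      · rw [inv_eq_of_mul_eq_one_right hu]; exact Or.inr (Or.inl rfl)
      · rw [inv_eq_of_mul_eq_one_right hv]; exact Or.inr (Or.inr (Or.inl rfl))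
      · rw [inv_eq_of_mul_eq_one_right e6]; exact Or.inr (Or.inr (Or.inr rfl))
  have huniv : (Set.univ : Set A) ⊆ ({1, u, v, u * v} : Set A) := by
    intro a _
    simp only [Set.mem_insert_iff, Set.mem_singleton_iff]
    exact hmem a
  have hfin : ({1, u, v, u * v} : Set A).Finite :=
    (Set.finite_singleton _).insert _ |>.insert _ |>.insert _
  have hle1 : Nat.card A ≤ ({1, u, v, u * v} : Set A).ncard := by
    rw [← Set.ncard_univ]
    exact Set.ncard_le_ncard huniv hfin
  have hle2 : ({1, u, v, u * v} : Set A).ncard ≤ 4 := by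
    have i1 := Set.ncard_insert_le (1 : A) ({u, v, u * v} : Set A)
    have i2 := Set.ncard_insert_le u ({v, u * v} : Set A)
    have i3 := Set.ncard_insert_le v ({u * v} : Set A)
    have i4 := Set.ncard_singleton (u * v)
    omega
  omega

end Aux

/-- Let `G` be a finite 2-group with `G/G' ≅ (ℤ/2)³` and `G/G₃` the Hall–Senior group
32.036, presented by generators `a₁, a₂, a₃` with `a₁² ≡ a₂² ≡ 1`, `a₃² ≡ c₁₃`,
`c₂₃ ≡ 1 (mod G₃)`. Let `B = ⟨a₃, a₁a₂, G'⟩`. Then the Frattini subgroup `B²B'` of `B`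
equals `G'`, and hence `B` has rank 2. -/
theorem frattini_of_B_eq_derived {G : Type*} [Group G] [Finite G] (hp : IsPGroup 2 G)
    (a₁ a₂ a₃ : G) (hgen : Subgroup.closure {a₁, a₂, a₃} = (⊤ : Subgroup G))
    (hab8 : Nat.card (G ⧸ commutator G) = 8)
    (habexp : ∀ x : G, x ^ 2 ∈ commutator G)
    (h1 : a₁ ^ 2 ∈ (⊤ : Subgroup G).lowerCentralSeries 2)
    (h2 : a₂ ^ 2 ∈ (⊤ : Subgroup G).lowerCentralSeries 2)
    (h3 : a₃ ^ 2 * (⁅a₁, a₃⁆)⁻¹ ∈ (⊤ : Subgroup G).lowerCentralSeries 2)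
    (h23 : ⁅a₂, a₃⁆ ∈ (⊤ : Subgroup G).lowerCentralSeries 2)
    (hcard : Nat.card (G ⧸ (⊤ : Subgroup G).lowerCentralSeries 2) = 32)
    (B : Subgroup G) (hB : B = Subgroup.closure {a₃, a₁ * a₂} ⊔ commutator G) :
    (Subgroup.closure ((fun x => x ^ 2) '' (B : Set G)) ⊔ ⁅B, B⁆ = commutator G) ∧
    (∃ x y : G, Subgroup.closure {x, y} = B) ∧
    ¬(∃ x : G, Subgroup.closure {x} = B) := by
  classical
  set N : Subgroup G := Subgroup.closure ((fun x => x ^ 2) '' (B : Set G)) ⊔ ⁅B, B⁆ with hNdef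
  have hG'B : commutator G ≤ B := hB ▸ le_sup_right
  have ha3B : a₃ ∈ B := by
    rw [hB]
    exact mem_sup_left (subset_closure (Or.inl rfl))
  have ha12B : a₁ * a₂ ∈ B := by
    rw [hB]
    exact mem_sup_left (subset_closure (Or.inr rfl))
  have memcomm : ∀ x y : G, ⁅x, y⁆ ∈ commutator G := by
    intro x y
    rw [_root_.commutator_def]
    exact Subgroup.commutator_mem_commutator (mem_top x) (mem_top y)
  haveI hBn : B.Normal := by
    constructor
    intro n hn g
    have h1' : g * n * g⁻¹ = n * ⁅n⁻¹, g⁆ := by rw [commutatorElement_def]; group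
    rw [h1']
    exact mul_mem hn (hG'B (memcomm n⁻¹ g))
  haveI hsqn : (Subgroup.closure ((fun x => x ^ 2) '' (B : Set G))).Normal := by
    constructor
    intro n hn g
    refine Subgroup.closure_induction
      (p := fun n _ => g * n * g⁻¹ ∈ Subgroup.closure ((fun x => x ^ 2) '' (B : Set G)))
      ?_ ?_ ?_ ?_ hn
    · rintro _ ⟨b, hb, rfl⟩
      rw [show g * b ^ 2 * g⁻¹ = (g * b * g⁻¹) ^ 2 from conj_pow.symm]
      exact subset_closure ⟨g * b * g⁻¹, hBn.conj_mem b hb g, rfl⟩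
    · simpa using one_mem _
    · intro x y _ _ hx hy
      have hxy : g * (x * y) * g⁻¹ = (g * x * g⁻¹) * (g * y * g⁻¹) := by group
      rw [hxy]; exact mul_mem hx hy
    · intro x _ hx
      have hxi : g * x⁻¹ * g⁻¹ = (g * x * g⁻¹)⁻¹ := by group
      rw [hxi]; exact inv_mem hx
  haveI hBBn : (⁅B, B⁆ : Subgroup G).Normal := Subgroup.commutator_normal B B
  haveI hNn : N.Normal := Subgroup.sup_normal _ _
  have hNle : N ≤ commutator G := by
    apply sup_le
    · rw [Subgroup.closure_le]
      rintro _ ⟨b, -, rfl⟩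
      exact habexp b
    · calc ⁅B, B⁆ ≤ ⁅(⊤ : Subgroup G), ⊤⁆ := Subgroup.commutator_mono le_top le_top
        _ = commutator G := (_root_.commutator_def G).symm
  set M : Subgroup G := N ⊔ (⊤ : Subgroup G).lowerCentralSeries 2 with hMdef
  haveI hMn : M.Normal := Subgroup.sup_normal _ _
  have hlcsM : (⊤ : Subgroup G).lowerCentralSeries 2 ≤ M := le_sup_right
  have hNM : N ≤ M := le_sup_left
  have hc13 : ⁅a₁, a₃⁆ ∈ M := by
    have ha3sq : a₃ ^ 2 ∈ N := mem_sup_left (subset_closure ⟨a₃, ha3B, rfl⟩)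
    have hid : ⁅a₁, a₃⁆ = (a₃ ^ 2 * ⁅a₁, a₃⁆⁻¹)⁻¹ * a₃ ^ 2 := by
      rw [mul_inv_rev, inv_inv, mul_assoc, inv_mul_cancel, mul_one]
    rw [hid]
    exact mul_mem (inv_mem (hlcsM h3)) (hNM ha3sq)
  have hc23 : ⁅a₂, a₃⁆ ∈ M := hlcsM h23
  have hc12 : ⁅a₁, a₂⁆ ∈ M := by
    have h12sq : (a₁ * a₂) ^ 2 ∈ N := mem_sup_left (subset_closure ⟨a₁ * a₂, ha12B, rfl⟩)
    have hcinv : ⁅a₁⁻¹, a₂⁆ = (a₁ ^ 2)⁻¹ * ((a₁ * a₂) ^ 2 * (a₂ ^ 2)⁻¹) := by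
      simp only [commutatorElement_def, pow_two]
      group
    have hc' : ⁅a₁⁻¹, a₂⁆ ∈ M := by
      rw [hcinv]
      exact mul_mem (inv_mem (hlcsM h1)) (mul_mem (hNM h12sq) (inv_mem (hlcsM h2)))
    have hid : ⁅a₁, a₂⁆ = a₁ * ⁅a₁⁻¹, a₂⁆⁻¹ * a₁⁻¹ := by
      simp only [commutatorElement_def]; group
    rw [hid]
    exact hMn.conj_mem _ (inv_mem hc') a₁
  -- first component
  have hfirst : N = commutator G := by
    apply hall_descent hp N hNn
    apply le_antisymm
    · apply sup_le hNle
      calc (⊤ : Subgroup G).lowerCentralSeries 2 ≤ (⊤ : Subgroup G).lowerCentralSeries 1 :=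
            Subgroup.lowerCentralSeries_antitone _ (by omega)
        _ = commutator G := Subgroup.top_lowerCentralSeries_one
    · refine le_trans (commutator_le_closure_three a₁ a₂ a₃ hgen) ?_
      apply sup_le _ le_sup_right
      rw [Subgroup.closure_le]
      rintro z (rfl | rfl | rfl)
      · exact hc12
      · exact hc13
      · exact hc23
  refine ⟨hfirst, ?_, ?_⟩
  -- second component
  · refine ⟨a₃, a₁ * a₂, ?_⟩
    have hK'B : Subgroup.closure {a₃, a₁ * a₂} ≤ B := by
      rw [Subgroup.closure_le]
      rintro z (rfl | rfl)
      · exact ha3B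
      · exact ha12B
    have hpB : IsPGroup 2 B := hp.to_subgroup B
    have hmap1 : (Subgroup.closure ((fun x => x ^ 2) '' (Set.univ : Set ↥B))).map B.subtype
        = Subgroup.closure ((fun x => x ^ 2) '' (B : Set G)) := by
      rw [MonoidHom.map_closure]
      congr 1
      ext g
      constructor
      · rintro ⟨_, ⟨b, -, rfl⟩, rfl⟩
        exact ⟨(b : G), b.2, by simp⟩
      · rintro ⟨g', hg', rfl⟩
        exact ⟨(⟨g', hg'⟩ : ↥B) ^ 2, ⟨⟨g', hg'⟩, Set.mem_univ _, rfl⟩, by simp⟩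
    have hmap2 : (⁅(⊤ : Subgroup ↥B), (⊤ : Subgroup ↥B)⁆).map B.subtype = ⁅B, B⁆ := by
      rw [Subgroup.map_commutator]
      congr 1 <;> rw [← MonoidHom.range_eq_map, Subgroup.range_subtype]
    have hKtop : (Subgroup.closure {a₃, a₁ * a₂}).subgroupOf B = ⊤ := by
      apply two_group_nongen hpB
      apply Subgroup.map_injective B.subtype_injective
      rw [Subgroup.map_sup, Subgroup.map_sup, hmap1, hmap2,
        Subgroup.subgroupOf_map_subtype, inf_eq_left.mpr hK'B,
        ← MonoidHom.range_eq_map, Subgroup.range_subtype]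
      rw [← hNdef, hfirst]
      exact hB.symm
    have hfin := congrArg (Subgroup.map B.subtype) hKtop
    rwa [Subgroup.subgroupOf_map_subtype, inf_eq_left.mpr hK'B,
      ← MonoidHom.range_eq_map, Subgroup.range_subtype] at hfin
  -- third component
  · rintro ⟨x, hx⟩
    set mk : G →* G ⧸ commutator G := QuotientGroup.mk' (commutator G) with hmk
    have hmksurj : Function.Surjective mk := QuotientGroup.mk'_surjective _
    set u : G ⧸ commutator G := mk a₁ with hu'
    set v : G ⧸ commutator G := mk x with hv'
    have hone : ∀ z : G, z ∈ commutator G → mk z = 1 := by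
      intro z hz
      simpa only [hmk, QuotientGroup.mk'_apply, QuotientGroup.eq_one_iff] using hz
    have hu : u * u = 1 := by
      rw [hu', ← map_mul, ← sq]
      exact hone _ (habexp a₁)
    have hv : v * v = 1 := by
      rw [hv', ← map_mul, ← sq]
      exact hone _ (habexp x)
    have huv : u * v = v * u := by
      apply commutatorElement_eq_one_iff_mul_comm.mp
      rw [hu', hv', ← map_commutatorElement]
      exact hone _ (memcomm a₁ x)
    have hvmem : ∀ z : G, z ∈ B → mk z ∈ Subgroup.closure {v} := by
      intro z hz
      have : mk z ∈ (Subgroup.closure {x}).map mk := by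
        rw [hx]
        exact Subgroup.mem_map_of_mem mk hz
      rwa [MonoidHom.map_closure, Set.image_singleton] at this
    have hgenQ : Subgroup.closure {u, v} = ⊤ := by
      rw [eq_top_iff, ← Subgroup.map_top_of_surjective mk hmksurj, ← hgen,
        MonoidHom.map_closure]
      rw [Subgroup.closure_le]
      rintro w ⟨z, hz, rfl⟩
      simp only [Set.mem_insert_iff, Set.mem_singleton_iff] at hz
      rcases hz with h | h | h
      · rw [h]; exact subset_closure (Or.inl rfl)
      · rw [h]
        have h12 : mk (a₁ * a₂) ∈ Subgroup.closure {u, v} :=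
          Subgroup.closure_mono (by simp) (hvmem _ ha12B)
        have hid : mk a₂ = (mk a₁)⁻¹ * mk (a₁ * a₂) := by
          rw [map_mul]; group
        rw [hid]
        exact mul_mem (inv_mem (subset_closure (Or.inl rfl))) h12
      · rw [h]; exact Subgroup.closure_mono (by simp) (hvmem _ ha3B)
    have hcard4 := card_le_four u v hu hv huv hgenQ
    omega
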